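/- Converse part of Theorem 1: for the additive-noise two-way channel with stationary ergodic noise processes Z1 and Z2 that are independent of each other and of the messages, every achievable rate pair (R1, R2) satisfies R1 ≤ log q − H̄(Z2) and R2 ≤ log q − H̄(Z1), where H̄(Zj) = lim_{n→∞} H(Z_j^n)/n. -/

import Mathlib

open MeasureTheory ProbabilityTheory Real Filter Topology
open scoped ENNReal

noncomputable section

/-- Shannon entropy (in the same base as `Real.log`) of a finitely-valued random variable. -/
def Hent {Ω S : Type*} [MeasurableSpace Ω] [Fintype S] (μ : Measure Ω) (X : Ω → S) : ℝ :=
  ∑ s : S, Real.negMulLog ((μ (X ⁻¹' {s})).toReal)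

/-- An (n, M1, M2) code for the two-way channel: at time `i` the encoder of user `j`
maps its message and the `i` previously received symbols to a channel input, and at
the end of transmission user `j` decodes the other user's message from its own
message and its `n` received symbols. -/
structure TWCode (q n M1 M2 : ℕ) where
  f1 : Fin M1 → (i : Fin n) → (Fin i.1 → ZMod q) → ZMod q
  f2 : Fin M2 → (i : Fin n) → (Fin i.1 → ZMod q) → ZMod q
  g1 : Fin M1 → (Fin n → ZMod q) → Fin M2
  g2 : Fin M2 → (Fin n → ZMod q) → Fin M1

/-- The pair of channel inputs (X_{1,i}, X_{2,i}) produced by the adaptive encoders,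
where user 1 sees past outputs Y_{1,j} = X_{1,j} + X_{2,j} + Z_{1,j} and user 2 sees
past outputs Y_{2,j} = X_{1,j} + X_{2,j} + Z_{2,j} (addition mod q). -/
def TWX {q n M1 M2 : ℕ} (C : TWCode q n M1 M2) (w1 : Fin M1) (w2 : Fin M2)
    (z1 z2 : Fin n → ZMod q) : (i : Fin n) → ZMod q × ZMod q
  | i =>
    (C.f1 w1 i (fun j =>
        have h : j.1 < n := j.2.trans i.2
        (TWX C w1 w2 z1 z2 ⟨j.1, h⟩).1 + (TWX C w1 w2 z1 z2 ⟨j.1, h⟩).2 + z1 ⟨j.1, h⟩),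
     C.f2 w2 i (fun j =>
        have h : j.1 < n := j.2.trans i.2
        (TWX C w1 w2 z1 z2 ⟨j.1, h⟩).1 + (TWX C w1 w2 z1 z2 ⟨j.1, h⟩).2 + z2 ⟨j.1, h⟩))
  termination_by i => i.1
  decreasing_by all_goals exact j.2

/-- Output sequence Y_1^n at user 1. -/
def TWY1 {q n M1 M2 : ℕ} (C : TWCode q n M1 M2) (w1 : Fin M1) (w2 : Fin M2)
    (z1 z2 : Fin n → ZMod q) (i : Fin n) : ZMod q :=
  (TWX C w1 w2 z1 z2 i).1 + (TWX C w1 w2 z1 z2 i).2 + z1 i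

/-- Output sequence Y_2^n at user 2. -/
def TWY2 {q n M1 M2 : ℕ} (C : TWCode q n M1 M2) (w1 : Fin M1) (w2 : Fin M2)
    (z1 z2 : Fin n → ZMod q) (i : Fin n) : ZMod q :=
  (TWX C w1 w2 z1 z2 i).1 + (TWX C w1 w2 z1 z2 i).2 + z2 i

/-- The uniform probability measure on a (nonempty) finite type. -/
def unif (α : Type*) [Fintype α] [MeasurableSpace α] : Measure α :=
  (Fintype.card α : ℝ≥0∞)⁻¹ • Measure.count

/-- Probability that user 1 decodes W2 incorrectly: the messages (W1, W2) are uniform on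
`Fin M1 × Fin M2` and independent of everything else (they live on a fresh product factor),
and the noise sequences are the first `n` letters of the processes Z1, Z2. -/
def twPe1 {Ω : Type*} [MeasurableSpace Ω] (μ : Measure Ω) {q : ℕ}
    (Z1 Z2 : Ω → ℕ → ZMod q) {n M1 M2 : ℕ} (C : TWCode q n M1 M2) : ℝ≥0∞ :=
  ((unif (Fin M1 × Fin M2)).prod μ)
    {p | C.g1 p.1.1 (TWY1 C p.1.1 p.1.2 (fun i => Z1 p.2 i) (fun i => Z2 p.2 i)) ≠ p.1.2}

/-- Probability that user 2 decodes W1 incorrectly. -/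
def twPe2 {Ω : Type*} [MeasurableSpace Ω] (μ : Measure Ω) {q : ℕ}
    (Z1 Z2 : Ω → ℕ → ZMod q) {n M1 M2 : ℕ} (C : TWCode q n M1 M2) : ℝ≥0∞ :=
  ((unif (Fin M1 × Fin M2)).prod μ)
    {p | C.g2 p.1.2 (TWY2 C p.1.1 p.1.2 (fun i => Z1 p.2 i) (fun i => Z2 p.2 i)) ≠ p.1.1}

/-- A rate pair (R1, R2) is achievable for the additive-noise two-way channel with noise
processes Z1, Z2 (defined on (Ω, μ)) if there is a sequence of (n, M1⁽ⁿ⁾, M2⁽ⁿ⁾) codes with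
(1/n) log Mj⁽ⁿ⁾ ≥ Rj for all n ≥ 1 and both error probabilities tending to 0. -/
def twAchievable {Ω : Type*} [MeasurableSpace Ω] (μ : Measure Ω) (q : ℕ)
    (Z1 Z2 : Ω → ℕ → ZMod q) (R1 R2 : ℝ) : Prop :=
  ∃ (M1 M2 : ℕ → ℕ) (C : (n : ℕ) → TWCode q n (M1 n) (M2 n)),
    (∀ n : ℕ, 1 ≤ n → 0 < M1 n ∧ 0 < M2 n ∧
      R1 ≤ Real.log (M1 n) / n ∧ R2 ≤ Real.log (M2 n) / n) ∧
    Tendsto (fun n => twPe1 μ Z1 Z2 (C n)) atTop (𝓝 0) ∧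
    Tendsto (fun n => twPe2 μ Z1 Z2 (C n)) atTop (𝓝 0)

/-- The shift map on one-sided sequences. -/
def shift {α : Type*} (f : ℕ → α) (i : ℕ) : α := f (i + 1)



/-- Grouped entropy bound: the entropy sum of a nonnegative vector over a finset is at most
`negMulLog` of its total plus total times log of the cardinality. -/
lemma sum_negMulLog_le_base {S : Type*} (t : Finset S) (p : S → ℝ) (h0 : ∀ s ∈ t, 0 ≤ p s) :
    ∑ s ∈ t, Real.negMulLog (p s) ≤
      Real.negMulLog (∑ s ∈ t, p s) + (∑ s ∈ t, p s) * Real.log t.card := by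
  rcases t.eq_empty_or_nonempty with rfl | ht
  · simp
  set N : ℕ := t.card with hN
  have hNpos : 0 < (N : ℝ) := by exact_mod_cast Finset.card_pos.mpr ht
  set P : ℝ := ∑ s ∈ t, p s with hP
  have hjen := Real.concaveOn_negMulLog.le_map_sum (t := t) (w := fun _ => (N : ℝ)⁻¹)
    (p := p) (fun i _ => by positivity)
    (by simp [Finset.sum_const, hN]; field_simp) (fun i hi => h0 i hi)
  have hsum : ∑ s ∈ t, (N : ℝ)⁻¹ • p s = (N : ℝ)⁻¹ * P := by
    simp [smul_eq_mul, ← Finset.mul_sum, hP]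
  have hsum2 : ∑ s ∈ t, (N : ℝ)⁻¹ • Real.negMulLog (p s)
      = (N : ℝ)⁻¹ * ∑ s ∈ t, Real.negMulLog (p s) := by
    simp [smul_eq_mul, ← Finset.mul_sum]
  rw [hsum, hsum2] at hjen
  have hmul : Real.negMulLog ((N : ℝ)⁻¹ * P)
      = (N : ℝ)⁻¹ * Real.negMulLog P + (N : ℝ)⁻¹ * (P * Real.log N) := by
    rw [mul_comm, Real.negMulLog_mul]
    have : Real.negMulLog ((N : ℝ)⁻¹) = (N : ℝ)⁻¹ * Real.log N := by
      simp [Real.negMulLog, Real.log_inv]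
    rw [this]; ring
  rw [hmul] at hjen
  have := mul_le_mul_of_nonneg_left hjen (le_of_lt hNpos)
  calc ∑ s ∈ t, Real.negMulLog (p s)
      = (N : ℝ) * ((N : ℝ)⁻¹ * ∑ s ∈ t, Real.negMulLog (p s)) := by field_simp
    _ ≤ (N : ℝ) * ((N : ℝ)⁻¹ * Real.negMulLog P + (N : ℝ)⁻¹ * (P * Real.log N)) := this
    _ = Real.negMulLog P + P * Real.log N := by field_simp


/-- Entropy of a product distribution is the sum of entropies. -/
lemma sum_negMulLog_mul {A B : Type*} [Fintype A] [Fintype B]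
    (p : A → ℝ) (q : B → ℝ) (hp1 : ∑ a, p a = 1) (hq1 : ∑ b, q b = 1) :
    ∑ x : A × B, Real.negMulLog (p x.1 * q x.2)
      = ∑ a, Real.negMulLog (p a) + ∑ b, Real.negMulLog (q b) := by
  rw [Fintype.sum_prod_type]
  simp only [Real.negMulLog_mul]
  rw [Finset.sum_congr rfl (fun a _ => Finset.sum_add_distrib)]
  rw [Finset.sum_add_distrib]
  congr 1
  · rw [Finset.sum_congr rfl (fun a _ => by rw [← Finset.sum_mul, hq1, one_mul] :
      ∀ a ∈ Finset.univ, (∑ b, q b * Real.negMulLog (p a)) = Real.negMulLog (p a))]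
  · rw [Finset.sum_congr rfl (fun a (_ : a ∈ Finset.univ) => (Finset.mul_sum _ _ _).symm),
      ← Finset.sum_mul, hp1, one_mul]

/-- Gibbs / subadditivity at the level of probability vectors. -/
lemma sum_negMulLog_pair_le {A B : Type*} [Fintype A] [Fintype B]
    (r : A × B → ℝ) (h0 : ∀ x, 0 ≤ r x) (h1 : ∑ x, r x = 1) :
    ∑ x : A × B, Real.negMulLog (r x) ≤
      (∑ a, Real.negMulLog (∑ b, r (a, b))) + ∑ b, Real.negMulLog (∑ a, r (a, b)) := by
  set p := fun a => ∑ b, r (a, b) with hp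
  set q := fun b => ∑ a, r (a, b) with hq
  have hp0 : ∀ a, 0 ≤ p a := fun a => Finset.sum_nonneg fun b _ => h0 _
  have hq0 : ∀ b, 0 ≤ q b := fun b => Finset.sum_nonneg fun a _ => h0 _
  have hpr : ∀ x : A × B, r x ≤ p x.1 := fun x =>
    Finset.single_le_sum (fun b _ => h0 (x.1, b)) (Finset.mem_univ x.2)
  have hqr : ∀ x : A × B, r x ≤ q x.2 := fun x =>
    Finset.single_le_sum (fun a _ => h0 (a, x.2)) (Finset.mem_univ x.1)
  have key : ∀ x : A × B, Real.negMulLog (r x) ≤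
      -(r x * Real.log (p x.1)) - r x * Real.log (q x.2) + (p x.1 * q x.2 - r x) := by
    intro x
    rcases eq_or_lt_of_le (h0 x) with h | h
    · simp only [← h, Real.negMulLog_zero, mul_zero, zero_mul, neg_zero, sub_zero, zero_sub,
        neg_zero, zero_add, sub_zero]
      have := mul_nonneg (hp0 x.1) (hq0 x.2); linarith
    · have hpp : 0 < p x.1 := lt_of_lt_of_le h (hpr x)
      have hqq : 0 < q x.2 := lt_of_lt_of_le h (hqr x)
      have hlog : Real.log (p x.1 * q x.2 / r x) ≤ p x.1 * q x.2 / r x - 1 :=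
        Real.log_le_sub_one_of_pos (by positivity)
      have h2 := mul_le_mul_of_nonneg_left hlog h.le
      rw [Real.log_div (by positivity) h.ne', Real.log_mul hpp.ne' hqq.ne'] at h2
      have h3 : r x * (p x.1 * q x.2 / r x - 1) = p x.1 * q x.2 - r x := by
        field_simp
      rw [h3] at h2
      rw [Real.negMulLog]
      nlinarith [h2]
  have hsum := Finset.sum_le_sum (fun x (_ : x ∈ Finset.univ) => key x)
  have e_p : ∑ x : A × B, r x * Real.log (p x.1) = ∑ a, p a * Real.log (p a) := by
    rw [Fintype.sum_prod_type]
    exact Finset.sum_congr rfl fun a _ => by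
      show (∑ y : B, r (a, y) * Real.log (p a)) = _
      rw [← Finset.sum_mul]
  have e_q : ∑ x : A × B, r x * Real.log (q x.2) = ∑ b, q b * Real.log (q b) := by
    rw [Fintype.sum_prod_type_right]
    exact Finset.sum_congr rfl fun b _ => by
      show (∑ x : A, r (x, b) * Real.log (q b)) = _
      rw [← Finset.sum_mul]
  have e_pq : ∑ x : A × B, p x.1 * q x.2 = 1 := by
    have hp1 : ∑ a, p a = 1 := by rw [hp, ← Fintype.sum_prod_type]; exact h1
    have hq1 : ∑ b, q b = 1 := by rw [hq, ← Fintype.sum_prod_type_right]; exact h1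
    have e2 : ∑ x : A × B, p x.1 * q x.2 = (∑ a, p a) * (∑ b, q b) := by
      rw [Finset.sum_mul_sum]
      rw [Fintype.sum_prod_type]
    rw [e2, hp1, hq1, one_mul]
  have e1 : ∑ x : A × B, (-(r x * Real.log (p x.1)) - r x * Real.log (q x.2)
      + (p x.1 * q x.2 - r x))
      = (∑ a, Real.negMulLog (p a)) + (∑ b, Real.negMulLog (q b)) := by
    rw [Finset.sum_add_distrib, Finset.sum_sub_distrib, Finset.sum_sub_distrib,
      Finset.sum_neg_distrib, e_p, e_q, e_pq, h1]
    simp only [Real.negMulLog, neg_mul]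
    rw [Finset.sum_neg_distrib, Finset.sum_neg_distrib]
    ring
  rw [e1] at hsum
  exact hsum

section MeasureLemmas
variable {Ω : Type*} [MeasurableSpace Ω] (ν : Measure Ω) [IsProbabilityMeasure ν]
variable {S T : Type*} [Fintype S] [MeasurableSpace S] [MeasurableSingletonClass S]
  [Fintype T] [MeasurableSpace T] [MeasurableSingletonClass T]

lemma dist_sum_eq {X : Ω → S} (hX : Measurable X) (t : Finset S) :
    ∑ s ∈ t, (ν (X ⁻¹' {s})).toReal = (ν (X ⁻¹' ↑t)).toReal := by
  rw [← ENNReal.toReal_sum (fun s _ => measure_ne_top ν _)]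
  congr 1
  exact MeasureTheory.sum_measure_preimage_singleton t (fun s _ => hX (measurableSet_singleton s))

lemma dist_sum_one {X : Ω → S} (hX : Measurable X) :
    ∑ s : S, (ν (X ⁻¹' {s})).toReal = 1 := by
  rw [dist_sum_eq ν hX]
  simp

lemma dist_marginal_fst {X : Ω → S} {Y : Ω → T} (hXY : Measurable fun ω => (X ω, Y ω)) (s : S) :
    ∑ b : T, (ν ((fun ω => (X ω, Y ω)) ⁻¹' {(s, b)})).toReal = (ν (X ⁻¹' {s})).toReal := by
  classical
  have h := dist_sum_eq ν hXY (Finset.univ.image (fun b : T => (s, b)))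
  rw [Finset.sum_image (by intro x _ y _ hxy; exact congrArg Prod.snd hxy)] at h
  rw [h]
  congr 1
  congr 1
  ext ω
  simp [Prod.ext_iff, eq_comm]

lemma dist_marginal_snd {X : Ω → S} {Y : Ω → T} (hXY : Measurable fun ω => (X ω, Y ω)) (t : T) :
    ∑ a : S, (ν ((fun ω => (X ω, Y ω)) ⁻¹' {(a, t)})).toReal = (ν (Y ⁻¹' {t})).toReal := by
  classical
  have h := dist_sum_eq ν hXY (Finset.univ.image (fun a : S => (a, t)))
  rw [Finset.sum_image (by intro x _ y _ hxy; exact congrArg Prod.fst hxy)] at h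
  rw [h]
  congr 1
  congr 1
  ext ω
  simp [Prod.ext_iff, eq_comm]

lemma hent_comp_inj (φ : S → T) (hφ : Function.Injective φ) (X : Ω → S) :
    Hent ν (fun ω => φ (X ω)) = Hent ν X := by
  classical
  unfold Hent
  have hpre : ∀ s : S, (fun ω => φ (X ω)) ⁻¹' {φ s} = X ⁻¹' {s} := by
    intro s; ext ω; simp [hφ.eq_iff]
  have h1 : ∑ t : T, Real.negMulLog ((ν ((fun ω => φ (X ω)) ⁻¹' {t})).toReal)
      = ∑ t ∈ Finset.univ.image φ, Real.negMulLog ((ν ((fun ω => φ (X ω)) ⁻¹' {t})).toReal) := by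
    refine (Finset.sum_subset (Finset.subset_univ _) ?_).symm
    intro t _ ht
    have : (fun ω => φ (X ω)) ⁻¹' {t} = ∅ := by
      ext ω
      simp only [Set.mem_preimage, Set.mem_singleton_iff, Set.mem_empty_iff_false, iff_false]
      intro h
      exact ht (Finset.mem_image.mpr ⟨X ω, Finset.mem_univ _, h⟩)
    simp [this]
  rw [h1, Finset.sum_image (fun a _ b _ h => hφ h)]
  exact Finset.sum_congr rfl fun s _ => by rw [hpre s]

lemma hent_le_log_card {X : Ω → S} (hX : Measurable X) :
    Hent ν X ≤ Real.log (Fintype.card S) := by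
  have h := sum_negMulLog_le_base Finset.univ (fun s => (ν (X ⁻¹' {s})).toReal)
    (fun s _ => ENNReal.toReal_nonneg)
  rw [dist_sum_one ν hX] at h
  simpa [Hent] using h

lemma hent_pair_le {X : Ω → S} {Y : Ω → T} (hX : Measurable X) (hY : Measurable Y) :
    Hent ν (fun ω => (X ω, Y ω)) ≤ Hent ν X + Hent ν Y := by
  have hXY : Measurable (fun ω => (X ω, Y ω)) := hX.prodMk hY
  have h := sum_negMulLog_pair_le (fun x : S × T => (ν ((fun ω => (X ω, Y ω)) ⁻¹' {x})).toReal)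
    (fun x => ENNReal.toReal_nonneg) (dist_sum_one ν hXY)
  unfold Hent
  refine h.trans (le_of_eq ?_)
  congr 1
  · exact Finset.sum_congr rfl fun s _ => by rw [dist_marginal_fst ν hXY]
  · exact Finset.sum_congr rfl fun t _ => by rw [dist_marginal_snd ν hXY]

lemma hent_comp_le (ψ : S → T) [DecidableEq T] {X : Ω → S} (hX : Measurable X) :
    Hent ν X ≤ Hent ν (fun ω => ψ (X ω)) +
      ∑ t : T, (ν ((fun ω => ψ (X ω)) ⁻¹' {t})).toReal *
        Real.log ((Finset.univ.filter (fun s => ψ s = t)).card) := by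
  unfold Hent
  rw [← Finset.sum_fiberwise (g := ψ)
    (f := fun s => Real.negMulLog ((ν (X ⁻¹' {s})).toReal)) Finset.univ]
  rw [← Finset.sum_add_distrib]
  refine Finset.sum_le_sum fun t _ => ?_
  have hset : X ⁻¹' ↑(Finset.univ.filter (fun s => ψ s = t))
      = (fun ω => ψ (X ω)) ⁻¹' {t} := by
    ext ω; simp
  have hPt : ∑ s ∈ Finset.univ.filter (fun s => ψ s = t), (ν (X ⁻¹' {s})).toReal
      = (ν ((fun ω => ψ (X ω)) ⁻¹' {t})).toReal := by
    rw [dist_sum_eq ν hX, hset]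
  calc ∑ s ∈ Finset.univ.filter (fun s => ψ s = t), Real.negMulLog ((ν (X ⁻¹' {s})).toReal)
      ≤ Real.negMulLog (∑ s ∈ Finset.univ.filter (fun s => ψ s = t), (ν (X ⁻¹' {s})).toReal)
        + (∑ s ∈ Finset.univ.filter (fun s => ψ s = t), (ν (X ⁻¹' {s})).toReal) *
          Real.log ((Finset.univ.filter (fun s => ψ s = t)).card) :=
        sum_negMulLog_le_base _ _ (fun s _ => ENNReal.toReal_nonneg)
    _ = _ := by rw [hPt]

end MeasureLemmas

section Fano
variable {Ω : Type*} [MeasurableSpace Ω] (ν : Measure Ω) [IsProbabilityMeasure ν]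
variable {A B : Type*} [Fintype A] [MeasurableSpace A] [MeasurableSingletonClass A]
  [Fintype B] [MeasurableSpace B] [MeasurableSingletonClass B]

lemma fano {X : Ω → A} {T : Ω → B} (hX : Measurable X) (hT : Measurable T) (g : B → A) :
    Hent ν (fun ω => (X ω, T ω)) ≤ Hent ν T + Real.log 2 +
      (ν {ω | g (T ω) ≠ X ω}).toReal * Real.log (Fintype.card A) := by
  classical
  have hΩ : Nonempty Ω := by
    by_contra h
    have : (Set.univ : Set Ω) = ∅ := by
      simp [Set.eq_empty_iff_forall_notMem]; intro x; exact h ⟨x⟩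
    have h1 : ν Set.univ = 1 := measure_univ
    rw [this] at h1
    simp at h1
  have hA : Nonempty A := ⟨X (Classical.choice hΩ)⟩
  have hcardA : 1 ≤ Fintype.card A := Fintype.card_pos
  set ψ : A × B → B × Bool := fun x => (x.2, decide (g x.2 = x.1)) with hψ
  have h := hent_comp_le ν ψ (hX.prodMk hT)
  have hEmeas : Measurable (fun ω => (T ω, decide (g (T ω) = X ω))) := by
    have : (fun ω => (T ω, decide (g (T ω) = X ω)))
        = (fun x : A × B => ψ x) ∘ (fun ω => (X ω, T ω)) := rfl
    rw [this]
    exact (measurable_of_countable _).comp (hX.prodMk hT)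
  -- entropy of (T, E)
  have hTE : Hent ν (fun ω => ψ (X ω, T ω)) ≤ Hent ν T + Real.log 2 := by
    have h1 : Hent ν (fun ω => (T ω, decide (g (T ω) = X ω)))
        ≤ Hent ν T + Hent ν (fun ω => decide (g (T ω) = X ω)) :=
      hent_pair_le ν hT (by
        have : (fun ω => decide (g (T ω) = X ω))
            = (fun x : A × B => decide (g x.2 = x.1)) ∘ (fun ω => (X ω, T ω)) := rfl
        rw [this]; exact (measurable_of_countable _).comp (hX.prodMk hT))
    have h2 : Hent ν (fun ω => decide (g (T ω) = X ω)) ≤ Real.log 2 := by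
      have := hent_le_log_card ν (X := fun ω => decide (g (T ω) = X ω)) (by
        have : (fun ω => decide (g (T ω) = X ω))
            = (fun x : A × B => decide (g x.2 = x.1)) ∘ (fun ω => (X ω, T ω)) := rfl
        rw [this]; exact (measurable_of_countable _).comp (hX.prodMk hT))
      simpa using this
    exact h1.trans (by linarith)
  -- fiber bound
  have hfiber : ∑ v : B × Bool, (ν ((fun ω => ψ (X ω, T ω)) ⁻¹' {v})).toReal *
      Real.log ((Finset.univ.filter (fun x : A × B => ψ x = v)).card)
      ≤ (ν {ω | g (T ω) ≠ X ω}).toReal * Real.log (Fintype.card A) := by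
    have hcard : ∀ v : B × Bool,
        ((Finset.univ.filter (fun x : A × B => ψ x = v)).card : ℝ) ≤ Fintype.card A ∧
        (v.2 = true → Real.log ((Finset.univ.filter (fun x : A × B => ψ x = v)).card) = 0) := by
      intro v
      constructor
      · have hinj : Set.InjOn (fun x : A × B => x.1)
            ↑(Finset.univ.filter (fun x : A × B => ψ x = v)) := by
          intro x hx y hy hxy
          simp only [Finset.coe_filter, Set.mem_setOf_eq, hψ, Prod.ext_iff] at hx hy
          exact Prod.ext hxy (hx.2.1.trans hy.2.1.symm)
        have := Finset.card_le_card_of_injOn (fun x : A × B => x.1)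
          (fun x _ => Finset.mem_univ _) hinj
        exact_mod_cast this.trans (le_of_eq rfl)
      · intro hv
        have : Finset.univ.filter (fun x : A × B => ψ x = v) = {(g v.1, v.1)} := by
          ext x
          simp only [Finset.mem_filter, Finset.mem_univ, true_and, Finset.mem_singleton, hψ,
            Prod.ext_iff]
          constructor
          · rintro ⟨h1, h2⟩
            rw [hv] at h2
            simp only [decide_eq_true_eq] at h2
            exact ⟨by rw [← h1, ← h2], h1⟩
          · rintro ⟨h1, h2⟩
            refine ⟨h2, ?_⟩
            rw [hv]
            simp [h1, h2]
        rw [this]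
        simp
    -- bound each term
    have hterm : ∀ v : B × Bool, (ν ((fun ω => ψ (X ω, T ω)) ⁻¹' {v})).toReal *
        Real.log ((Finset.univ.filter (fun x : A × B => ψ x = v)).card)
        ≤ (if v.2 = false then (ν ((fun ω => ψ (X ω, T ω)) ⁻¹' {v})).toReal else 0) *
          Real.log (Fintype.card A) := by
      intro v
      rcases Bool.eq_false_or_eq_true v.2 with hv | hv
      · rw [if_neg (by simp [hv]), zero_mul, (hcard v).2 hv, mul_zero]
      · rw [if_pos hv]
        refine mul_le_mul_of_nonneg_left ?_ ENNReal.toReal_nonneg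
        rcases Nat.eq_zero_or_pos (Finset.univ.filter (fun x : A × B => ψ x = v)).card with h0 | h0
        · rw [h0]
          simpa using Real.log_nonneg (by exact_mod_cast hcardA)
        · exact Real.log_le_log (by exact_mod_cast h0) ((hcard v).1)
    refine (Finset.sum_le_sum (fun v _ => hterm v)).trans ?_
    rw [← Finset.sum_mul]
    refine mul_le_mul_of_nonneg_right (le_of_eq ?_) (Real.log_nonneg (by exact_mod_cast hcardA))
    have : ∑ v : B × Bool, (if v.2 = false then (ν ((fun ω => ψ (X ω, T ω)) ⁻¹' {v})).toReal else 0)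
        = ∑ t : B, (ν ((fun ω => ψ (X ω, T ω)) ⁻¹' {(t, false)})).toReal := by
      rw [Fintype.sum_prod_type]
      refine Finset.sum_congr rfl fun t _ => ?_
      simp
    rw [this]
    have hmarg := dist_marginal_snd ν (X := T) (Y := fun ω => decide (g (T ω) = X ω))
      hEmeas false
    rw [hmarg]
    congr 1
    congr 1
    ext ω
    simp
  have hfinal := h.trans (add_le_add hTE hfiber)
  linarith [hfinal]
end Fano

section TW

lemma TWX_congr_aux {q n M1 M2 : ℕ} (C : TWCode q n M1 M2) (w1 : Fin M1) (w2 : Fin M2)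
    (z1 z2 z1' z2' : Fin n → ZMod q) :
    ∀ k : ℕ, ∀ i : Fin n, i.1 < k →
      (∀ j : Fin n, j.1 < i.1 → z1 j = z1' j ∧ z2 j = z2' j) →
      TWX C w1 w2 z1 z2 i = TWX C w1 w2 z1' z2' i := by
  intro k
  induction k with
  | zero => intro i hi; omega
  | succ k ih =>
    intro i hik h12
    rw [TWX, TWX]
    have harg : ∀ (z z' : Fin n → ZMod q), (∀ j : Fin n, j.1 < i.1 → z j = z' j) →
        (fun j : Fin i.1 =>
          have h : j.1 < n := j.2.trans i.2
          (TWX C w1 w2 z1 z2 ⟨j.1, h⟩).1 + (TWX C w1 w2 z1 z2 ⟨j.1, h⟩).2 + z ⟨j.1, h⟩)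
        = (fun j : Fin i.1 =>
          have h : j.1 < n := j.2.trans i.2
          (TWX C w1 w2 z1' z2' ⟨j.1, h⟩).1 + (TWX C w1 w2 z1' z2' ⟨j.1, h⟩).2 + z' ⟨j.1, h⟩) := by
      intro z z' hz
      funext j
      have h : j.1 < n := j.2.trans i.2
      have hX := ih ⟨j.1, h⟩ (lt_of_lt_of_le j.2 (Nat.lt_succ_iff.mp hik)) (fun m hm => h12 m (by exact hm.trans j.2))
      simp only [hX, hz ⟨j.1, h⟩ j.2]
    rw [harg z1 z1' (fun j hj => (h12 j hj).1), harg z2 z2' (fun j hj => (h12 j hj).2)]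

lemma TWX_congr {q n M1 M2 : ℕ} (C : TWCode q n M1 M2) (w1 : Fin M1) (w2 : Fin M2)
    (z1 z2 z1' z2' : Fin n → ZMod q) (i : Fin n)
    (h12 : ∀ j : Fin n, j.1 < i.1 → z1 j = z1' j ∧ z2 j = z2' j) :
    TWX C w1 w2 z1 z2 i = TWX C w1 w2 z1' z2' i :=
  TWX_congr_aux C w1 w2 z1 z2 z1' z2' (i.1 + 1) i (by omega) h12

lemma TWY2_inj {q n M1 M2 : ℕ} (C : TWCode q n M1 M2) (w1 : Fin M1) (w2 : Fin M2)
    (z1 : Fin n → ZMod q) : Function.Injective (fun z2 => TWY2 C w1 w2 z1 z2) := by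
  intro t t' h
  have key : ∀ k : ℕ, ∀ i : Fin n, i.1 < k → t i = t' i := by
    intro k
    induction k with
    | zero => intro i hi; omega
    | succ k ih =>
      intro i hik
      have hx : TWX C w1 w2 z1 t i = TWX C w1 w2 z1 t' i :=
        TWX_congr C w1 w2 z1 t z1 t' i (fun j hj => ⟨rfl, ih j (lt_of_lt_of_le hj (Nat.lt_succ_iff.mp hik))⟩)
      have hy := congrFun h i
      simp only [TWY2] at hy
      rw [hx] at hy
      exact add_left_cancel hy
  funext i
  exact key (i.1 + 1) i (by omega)

lemma TWY1_inj {q n M1 M2 : ℕ} (C : TWCode q n M1 M2) (w1 : Fin M1) (w2 : Fin M2)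
    (z2 : Fin n → ZMod q) : Function.Injective (fun z1 => TWY1 C w1 w2 z1 z2) := by
  intro t t' h
  have key : ∀ k : ℕ, ∀ i : Fin n, i.1 < k → t i = t' i := by
    intro k
    induction k with
    | zero => intro i hi; omega
    | succ k ih =>
      intro i hik
      have hx : TWX C w1 w2 t z2 i = TWX C w1 w2 t' z2 i :=
        TWX_congr C w1 w2 t z2 t' z2 i (fun j hj => ⟨ih j (lt_of_lt_of_le hj (Nat.lt_succ_iff.mp hik)), rfl⟩)
      have hy := congrFun h i
      simp only [TWY1] at hy
      rw [hx] at hy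
      exact add_left_cancel hy
  funext i
  exact key (i.1 + 1) i (by omega)

end TW

section Chain
variable {Ω : Type*} [MeasurableSpace Ω] (ν : Measure Ω) [IsProbabilityMeasure ν]

/-- Abstract converse chain: if the joint entropy of `(D, (X, T))` splits as
`H(D) + H(X) + K`, then `H(X) + K` is bounded by Fano-type quantities. -/
lemma chain_ineq {A B S' : Type*} [Fintype A] [MeasurableSpace A] [MeasurableSingletonClass A]
    [Fintype B] [MeasurableSpace B] [MeasurableSingletonClass B]
    [Fintype S'] [MeasurableSpace S'] [MeasurableSingletonClass S']
    {X : Ω → A} {T : Ω → B} {D : Ω → S'}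
    (hX : Measurable X) (hT : Measurable T) (hD : Measurable D) (g : B → A) (K : ℝ)
    (hIdent : Hent ν (fun ω => (D ω, (X ω, T ω))) = Hent ν D + (Hent ν X + K)) :
    Hent ν X + K ≤ Real.log (Fintype.card B) + Real.log 2 +
      (ν {ω | g (T ω) ≠ X ω}).toReal * Real.log (Fintype.card A) := by
  have h1 : Hent ν (fun ω => (D ω, (X ω, T ω))) ≤
      Hent ν D + Hent ν (fun ω => (X ω, T ω)) :=
    hent_pair_le ν hD (hX.prodMk hT)
  have h2 := fano ν hX hT g
  have h3 := hent_le_log_card ν hT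
  rw [hIdent] at h1
  linarith

lemma sum_prod_eq_one {A B : Type*} [Fintype A] [Fintype B] (p : A → ℝ) (q : B → ℝ)
    (hp : ∑ a, p a = 1) (hq : ∑ b, q b = 1) : ∑ x : A × B, p x.1 * q x.2 = 1 := by
  have h : ∑ x : A × B, p x.1 * q x.2 = (∑ a, p a) * (∑ b, q b) := by
    rw [Finset.sum_mul_sum, Fintype.sum_prod_type]
  rw [h, hp, hq, one_mul]

lemma sum_negMulLog_mul4 {A B C D : Type*} [Fintype A] [Fintype B] [Fintype C] [Fintype D]
    (p : A → ℝ) (q : B → ℝ) (r : C → ℝ) (u : D → ℝ)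
    (hp : ∑ a, p a = 1) (hq : ∑ b, q b = 1) (hr : ∑ c, r c = 1) (hu : ∑ d, u d = 1) :
    ∑ x : A × (B × (C × D)), Real.negMulLog (p x.1 * (q x.2.1 * (r x.2.2.1 * u x.2.2.2)))
      = (∑ a, Real.negMulLog (p a)) + ((∑ b, Real.negMulLog (q b))
        + ((∑ c, Real.negMulLog (r c)) + (∑ d, Real.negMulLog (u d)))) := by
  have h34 := sum_negMulLog_mul r u hr hu
  have h34s := sum_prod_eq_one r u hr hu
  have h234 := sum_negMulLog_mul q (fun y : C × D => r y.1 * u y.2) hq h34s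
  have h234s := sum_prod_eq_one q (fun y : C × D => r y.1 * u y.2) hq h34s
  have h1234 := sum_negMulLog_mul p (fun y : B × (C × D) => q y.1 * (r y.2.1 * u y.2.2)) hp h234s
  calc ∑ x : A × (B × (C × D)), Real.negMulLog (p x.1 * (q x.2.1 * (r x.2.2.1 * u x.2.2.2)))
      = ∑ x : A × (B × (C × D)), Real.negMulLog (p x.1 *
          (fun y : B × (C × D) => q y.1 * (r y.2.1 * u y.2.2)) x.2) := rfl
    _ = (∑ a, Real.negMulLog (p a)) +
        ∑ y : B × (C × D), Real.negMulLog (q y.1 * (r y.2.1 * u y.2.2)) := h1234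
    _ = (∑ a, Real.negMulLog (p a)) +
        ((∑ b, Real.negMulLog (q b)) + ∑ z : C × D, Real.negMulLog (r z.1 * u z.2)) := by
          rw [h234]
    _ = _ := by rw [h34]

lemma sum_inv_card {M : ℕ} (hM : 0 < M) : ∑ _a : Fin M, ((M : ℝ))⁻¹ = 1 := by
  rw [Finset.sum_const, Finset.card_univ, Fintype.card_fin, nsmul_eq_mul]
  field_simp

lemma sum_negMulLog_inv_card {M : ℕ} (hM : 0 < M) :
    ∑ _a : Fin M, Real.negMulLog ((M : ℝ))⁻¹ = Real.log M := by
  rw [Finset.sum_const, Finset.card_univ, Fintype.card_fin, nsmul_eq_mul]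
  rw [Real.negMulLog, Real.log_inv]
  have : (M : ℝ) ≠ 0 := by positivity
  field_simp

end Chain

section KeyIneq

variable {Ω : Type*} [MeasurableSpace Ω] (μ : Measure Ω) [IsProbabilityMeasure μ]
  {q : ℕ} [NeZero q]

/-- Probability of a message-rectangle under the code's joint measure. -/
lemma nu_msg_singleton {M1 M2 : ℕ} (w : Fin M1 × Fin M2) (E : Set Ω) :
    ((unif (Fin M1 × Fin M2)).prod μ) ({w} ×ˢ E) = ((M1 : ℝ≥0∞) * M2)⁻¹ * μ E := by
  rw [Measure.prod_prod]
  congr 1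
  rw [unif, Measure.smul_apply, Measure.count_singleton, smul_eq_mul, mul_one]
  congr 1
  simp [Fintype.card_prod]

lemma unif_isProb {M1 M2 : ℕ} (hM1 : 0 < M1) (hM2 : 0 < M2) :
    IsProbabilityMeasure (unif (Fin M1 × Fin M2)) := by
  constructor
  rw [unif, Measure.smul_apply, Measure.count_univ, smul_eq_mul]
  have hc : Fintype.card (Fin M1 × Fin M2) ≠ 0 := by
    simp only [Fintype.card_prod, Fintype.card_fin]
    exact Nat.mul_ne_zero hM1.ne' hM2.ne'
  rw [ENat.card_eq_coe_fintype_card, ENat.toENNReal_coe]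
  exact ENNReal.inv_mul_cancel (by exact_mod_cast hc) (ENNReal.natCast_ne_top _)

lemma key_ineq_R1 (Z1 Z2 : Ω → ℕ → ZMod q) (hZ1 : Measurable Z1) (hZ2 : Measurable Z2)
    (hIndep : IndepFun Z1 Z2 μ) {n M1 M2 : ℕ} (hM1 : 0 < M1) (hM2 : 0 < M2)
    (C : TWCode q n M1 M2) :
    Real.log M1 + Hent μ (fun ω => (fun i : Fin n => Z2 ω i)) ≤
      (n : ℝ) * Real.log q + Real.log 2 + (twPe2 μ Z1 Z2 C).toReal * Real.log M1 := by
  classical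
  haveI : IsProbabilityMeasure (unif (Fin M1 × Fin M2)) := unif_isProb hM1 hM2
  set ν : Measure ((Fin M1 × Fin M2) × Ω) := (unif (Fin M1 × Fin M2)).prod μ with hν
  haveI : IsProbabilityMeasure ν := by rw [hν]; infer_instance
  set Z1n : Ω → (Fin n → ZMod q) := fun ω => (fun i : Fin n => Z1 ω i) with hZ1n
  set Z2n : Ω → (Fin n → ZMod q) := fun ω => (fun i : Fin n => Z2 ω i) with hZ2n
  have hπ : Measurable (fun (z : ℕ → ZMod q) (i : Fin n) => z i) :=
    measurable_pi_lambda _ (fun i => measurable_pi_apply (i : ℕ))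
  have hZ1nm : Measurable Z1n := hπ.comp hZ1
  have hZ2nm : Measurable Z2n := hπ.comp hZ2
  have hIndepn : IndepFun Z1n Z2n μ := hIndep.comp hπ hπ
  set X : (Fin M1 × Fin M2) × Ω → Fin M1 := fun p => p.1.1 with hX
  set T : (Fin M1 × Fin M2) × Ω → Fin M2 × (Fin n → ZMod q) :=
    fun p => (p.1.2, TWY2 C p.1.1 p.1.2 (Z1n p.2) (Z2n p.2)) with hT
  set D : (Fin M1 × Fin M2) × Ω → (Fin n → ZMod q) := fun p => Z1n p.2 with hD
  have hXm : Measurable X := measurable_fst.comp measurable_fst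
  have hDm : Measurable D := hZ1nm.comp measurable_snd
  have hVm : Measurable (fun p : (Fin M1 × Fin M2) × Ω => (p.1, (Z1n p.2, Z2n p.2))) :=
    measurable_fst.prodMk
      ((hZ1nm.comp measurable_snd).prodMk (hZ2nm.comp measurable_snd))
  have hTm : Measurable T := by
    have heq : T = (fun x : (Fin M1 × Fin M2) × ((Fin n → ZMod q) × (Fin n → ZMod q)) =>
        (x.1.2, TWY2 C x.1.1 x.1.2 x.2.1 x.2.2)) ∘
        (fun p : (Fin M1 × Fin M2) × Ω => (p.1, (Z1n p.2, Z2n p.2))) := rfl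
    rw [heq]
    exact (measurable_of_countable _).comp hVm
  set V0 : (Fin M1 × Fin M2) × Ω → (Fin n → ZMod q) × (Fin M1 × (Fin M2 × (Fin n → ZMod q))) :=
    fun p => (Z1n p.2, (p.1.1, (p.1.2, Z2n p.2))) with hV0
  have hV0m : Measurable V0 := (hZ1nm.comp measurable_snd).prodMk
    ((measurable_fst.comp measurable_fst).prodMk
      ((measurable_snd.comp measurable_fst).prodMk (hZ2nm.comp measurable_snd)))
  set p1 : (Fin n → ZMod q) → ℝ := fun s => (μ (Z1n ⁻¹' {s})).toReal with hp1
  set p2 : (Fin n → ZMod q) → ℝ := fun t => (μ (Z2n ⁻¹' {t})).toReal with hp2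
  have hp1sum : ∑ s, p1 s = 1 := dist_sum_one μ hZ1nm
  have hp2sum : ∑ t, p2 t = 1 := dist_sum_one μ hZ2nm
  have distV0 : ∀ x : (Fin n → ZMod q) × (Fin M1 × (Fin M2 × (Fin n → ZMod q))),
      (ν (V0 ⁻¹' {x})).toReal
        = p1 x.1 * ((M1 : ℝ)⁻¹ * ((M2 : ℝ)⁻¹ * p2 x.2.2.2)) := by
    rintro ⟨s, a, b, t⟩
    have hset : V0 ⁻¹' {(s, (a, (b, t)))}
        = ({(a, b)} : Set (Fin M1 × Fin M2)) ×ˢ (Z1n ⁻¹' {s} ∩ Z2n ⁻¹' {t}) := by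
      ext p
      simp only [hV0, Set.mem_preimage, Set.mem_singleton_iff, Prod.ext_iff, Set.mem_prod,
        Set.mem_inter_iff]
      tauto
    rw [hset, hν, nu_msg_singleton μ,
      hIndepn.measure_inter_preimage_eq_mul _ _ (measurableSet_singleton s)
        (measurableSet_singleton t)]
    rw [ENNReal.toReal_mul, ENNReal.toReal_inv, ENNReal.toReal_mul, ENNReal.toReal_mul]
    simp only [ENNReal.toReal_natCast]
    rw [mul_inv]
    simp only [hp1, hp2]
    ring
  have hentV0 : Hent ν V0 = Hent μ Z1n + (Real.log M1 + (Real.log M2 + Hent μ Z2n)) := by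
    have h1 : Hent ν V0 = ∑ x : (Fin n → ZMod q) × (Fin M1 × (Fin M2 × (Fin n → ZMod q))),
        Real.negMulLog (p1 x.1 * ((fun _ : Fin M1 => (M1 : ℝ)⁻¹) x.2.1 *
          ((fun _ : Fin M2 => (M2 : ℝ)⁻¹) x.2.2.1 * p2 x.2.2.2))) := by
      unfold Hent
      exact Finset.sum_congr rfl fun x _ => by rw [distV0 x]
    rw [h1, sum_negMulLog_mul4 p1 _ _ p2 hp1sum (sum_inv_card hM1) (sum_inv_card hM2) hp2sum,
      sum_negMulLog_inv_card hM1, sum_negMulLog_inv_card hM2]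
    rfl
  have hentD : Hent ν D = Hent μ Z1n := by
    unfold Hent
    refine Finset.sum_congr rfl fun s _ => ?_
    have hm : ∑ y : Fin M1 × (Fin M2 × (Fin n → ZMod q)), (ν (V0 ⁻¹' {(s, y)})).toReal
        = (ν (D ⁻¹' {s})).toReal :=
      dist_marginal_fst ν (X := D) (Y := fun p => (p.1.1, (p.1.2, Z2n p.2))) hV0m s
    rw [← hm]
    have hsum : ∑ y : Fin M1 × (Fin M2 × (Fin n → ZMod q)), (ν (V0 ⁻¹' {(s, y)})).toReal
        = ∑ y : Fin M1 × (Fin M2 × (Fin n → ZMod q)),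
            p1 s * ((fun _ : Fin M1 => (M1 : ℝ)⁻¹) y.1 *
              ((fun _ : Fin M2 => (M2 : ℝ)⁻¹) y.2.1 * p2 y.2.2)) :=
      Finset.sum_congr rfl fun y _ => distV0 (s, y)
    rw [hsum, ← Finset.mul_sum]
    rw [sum_prod_eq_one (fun _ : Fin M1 => (M1 : ℝ)⁻¹)
      (fun z : Fin M2 × (Fin n → ZMod q) => (fun _ : Fin M2 => (M2 : ℝ)⁻¹) z.1 * p2 z.2)
      (sum_inv_card hM1) (sum_prod_eq_one _ _ (sum_inv_card hM2) hp2sum), mul_one]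
  have hentX : Hent ν X = Real.log M1 := by
    have hWm : Measurable (fun p : (Fin M1 × Fin M2) × Ω => (p.1.1, p.1.2)) :=
      (measurable_fst.comp measurable_fst).prodMk (measurable_snd.comp measurable_fst)
    have hW1dist : ∀ a : Fin M1, (ν (X ⁻¹' {a})).toReal = (M1 : ℝ)⁻¹ := by
      intro a
      have hm : ∑ b : Fin M2,
          (ν ((fun p : (Fin M1 × Fin M2) × Ω => (p.1.1, p.1.2)) ⁻¹' {(a, b)})).toReal
          = (ν (X ⁻¹' {a})).toReal := dist_marginal_fst ν hWm a
      rw [← hm]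
      have hone : ∀ b : Fin M2,
          (ν ((fun p : (Fin M1 × Fin M2) × Ω => (p.1.1, p.1.2)) ⁻¹' {(a, b)})).toReal
          = ((M1 : ℝ) * M2)⁻¹ := by
        intro b
        have hset : ((fun p : (Fin M1 × Fin M2) × Ω => (p.1.1, p.1.2)) ⁻¹' {(a, b)})
            = ({(a, b)} : Set (Fin M1 × Fin M2)) ×ˢ (Set.univ : Set Ω) := by
          ext p
          simp [Prod.ext_iff, eq_comm]
        rw [hset, hν, nu_msg_singleton μ, measure_univ, mul_one, ENNReal.toReal_inv,
          ENNReal.toReal_mul]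
        simp
      rw [Finset.sum_congr rfl (fun b _ => hone b), Finset.sum_const, Finset.card_univ,
        Fintype.card_fin, nsmul_eq_mul]
      have hM1' : (M1 : ℝ) ≠ 0 := Nat.cast_ne_zero.mpr hM1.ne'
      have hM2' : (M2 : ℝ) ≠ 0 := Nat.cast_ne_zero.mpr hM2.ne'
      field_simp
    unfold Hent
    rw [Finset.sum_congr rfl (fun a _ => by rw [hW1dist a])]
    exact sum_negMulLog_inv_card hM1
  -- bijection step
  set φ : (Fin n → ZMod q) × (Fin M1 × (Fin M2 × (Fin n → ZMod q))) →
      (Fin n → ZMod q) × (Fin M1 × (Fin M2 × (Fin n → ZMod q))) :=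
    fun x => (x.1, (x.2.1, (x.2.2.1, TWY2 C x.2.1 x.2.2.1 x.1 x.2.2.2))) with hφ
  have hφinj : Function.Injective φ := by
    rintro ⟨s, a, b, t⟩ ⟨s', a', b', t'⟩ h
    simp only [hφ, Prod.ext_iff] at h
    obtain ⟨hs, ha, hb, hy⟩ := h
    subst hs; subst ha; subst hb
    have ht : t = t' := TWY2_inj C a b s hy
    subst ht
    rfl
  have hbij : Hent ν (fun p => (D p, (X p, T p))) = Hent ν V0 := by
    have h := hent_comp_inj ν φ hφinj V0
    have heq : (fun p : (Fin M1 × Fin M2) × Ω => (D p, (X p, T p)))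
        = (fun ω => φ (V0 ω)) := rfl
    rw [heq, h]
  have hIdent : Hent ν (fun ω => (D ω, (X ω, T ω)))
      = Hent ν D + (Hent ν X + (Real.log M2 + Hent μ Z2n)) := by
    rw [hbij, hentV0, hentD, hentX]
  have hchain := chain_ineq ν hXm hTm hDm (fun t : Fin M2 × (Fin n → ZMod q) => C.g2 t.1 t.2)
    (Real.log M2 + Hent μ Z2n) hIdent
  rw [hentX] at hchain
  have hPe : (ν {ω | (fun t : Fin M2 × (Fin n → ZMod q) => C.g2 t.1 t.2) (T ω) ≠ X ω}).toReal
      = (twPe2 μ Z1 Z2 C).toReal := rfl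
  rw [hPe] at hchain
  have hcardA : (Fintype.card (Fin M1) : ℝ) = M1 := by simp
  have hcardB : Real.log (Fintype.card (Fin M2 × (Fin n → ZMod q)))
      = Real.log M2 + (n : ℝ) * Real.log q := by
    have h1 : Fintype.card (Fin M2 × (Fin n → ZMod q)) = M2 * q ^ n := by
      simp [Fintype.card_prod, Fintype.card_fun, ZMod.card]
    have hq0 : (q : ℝ) ≠ 0 := Nat.cast_ne_zero.mpr (NeZero.ne q)
    have hM2' : (M2 : ℝ) ≠ 0 := Nat.cast_ne_zero.mpr hM2.ne'
    rw [h1]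
    push_cast
    rw [Real.log_mul hM2' (pow_ne_zero n hq0), Real.log_pow]
  rw [hcardB, hcardA] at hchain
  have hZ2eq : Hent μ (fun ω => (fun i : Fin n => Z2 ω i)) = Hent μ Z2n := rfl
  rw [hZ2eq]
  linarith

end KeyIneq

section KeyIneq2

variable {Ω : Type*} [MeasurableSpace Ω] (μ : Measure Ω) [IsProbabilityMeasure μ]
  {q : ℕ} [NeZero q]

lemma key_ineq_R2 (Z1 Z2 : Ω → ℕ → ZMod q) (hZ1 : Measurable Z1) (hZ2 : Measurable Z2)
    (hIndep : IndepFun Z1 Z2 μ) {n M1 M2 : ℕ} (hM1 : 0 < M1) (hM2 : 0 < M2)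
    (C : TWCode q n M1 M2) :
    Real.log M2 + Hent μ (fun ω => (fun i : Fin n => Z1 ω i)) ≤
      (n : ℝ) * Real.log q + Real.log 2 + (twPe1 μ Z1 Z2 C).toReal * Real.log M2 := by
  classical
  haveI : IsProbabilityMeasure (unif (Fin M1 × Fin M2)) := unif_isProb hM1 hM2
  set ν : Measure ((Fin M1 × Fin M2) × Ω) := (unif (Fin M1 × Fin M2)).prod μ with hν
  haveI : IsProbabilityMeasure ν := by rw [hν]; infer_instance
  set Z1n : Ω → (Fin n → ZMod q) := fun ω => (fun i : Fin n => Z1 ω i) with hZ1n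
  set Z2n : Ω → (Fin n → ZMod q) := fun ω => (fun i : Fin n => Z2 ω i) with hZ2n
  have hπ : Measurable (fun (z : ℕ → ZMod q) (i : Fin n) => z i) :=
    measurable_pi_lambda _ (fun i => measurable_pi_apply (i : ℕ))
  have hZ1nm : Measurable Z1n := hπ.comp hZ1
  have hZ2nm : Measurable Z2n := hπ.comp hZ2
  have hIndepn : IndepFun Z2n Z1n μ := (hIndep.comp hπ hπ).symm
  set X : (Fin M1 × Fin M2) × Ω → Fin M2 := fun p => p.1.2 with hX
  set T : (Fin M1 × Fin M2) × Ω → Fin M1 × (Fin n → ZMod q) :=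
    fun p => (p.1.1, TWY1 C p.1.1 p.1.2 (Z1n p.2) (Z2n p.2)) with hT
  set D : (Fin M1 × Fin M2) × Ω → (Fin n → ZMod q) := fun p => Z2n p.2 with hD
  have hXm : Measurable X := measurable_snd.comp measurable_fst
  have hDm : Measurable D := hZ2nm.comp measurable_snd
  have hVm : Measurable (fun p : (Fin M1 × Fin M2) × Ω => (p.1, (Z1n p.2, Z2n p.2))) :=
    measurable_fst.prodMk
      ((hZ1nm.comp measurable_snd).prodMk (hZ2nm.comp measurable_snd))
  have hTm : Measurable T := by
    have heq : T = (fun x : (Fin M1 × Fin M2) × ((Fin n → ZMod q) × (Fin n → ZMod q)) =>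
        (x.1.1, TWY1 C x.1.1 x.1.2 x.2.1 x.2.2)) ∘
        (fun p : (Fin M1 × Fin M2) × Ω => (p.1, (Z1n p.2, Z2n p.2))) := rfl
    rw [heq]
    exact (measurable_of_countable _).comp hVm
  set V0 : (Fin M1 × Fin M2) × Ω → (Fin n → ZMod q) × (Fin M2 × (Fin M1 × (Fin n → ZMod q))) :=
    fun p => (Z2n p.2, (p.1.2, (p.1.1, Z1n p.2))) with hV0
  have hV0m : Measurable V0 := (hZ2nm.comp measurable_snd).prodMk
    ((measurable_snd.comp measurable_fst).prodMk
      ((measurable_fst.comp measurable_fst).prodMk (hZ1nm.comp measurable_snd)))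
  set p1 : (Fin n → ZMod q) → ℝ := fun s => (μ (Z1n ⁻¹' {s})).toReal with hp1
  set p2 : (Fin n → ZMod q) → ℝ := fun t => (μ (Z2n ⁻¹' {t})).toReal with hp2
  have hp1sum : ∑ s, p1 s = 1 := dist_sum_one μ hZ1nm
  have hp2sum : ∑ t, p2 t = 1 := dist_sum_one μ hZ2nm
  have distV0 : ∀ x : (Fin n → ZMod q) × (Fin M2 × (Fin M1 × (Fin n → ZMod q))),
      (ν (V0 ⁻¹' {x})).toReal
        = p2 x.1 * ((M2 : ℝ)⁻¹ * ((M1 : ℝ)⁻¹ * p1 x.2.2.2)) := by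
    rintro ⟨s, b, a, t⟩
    have hset : V0 ⁻¹' {(s, (b, (a, t)))}
        = ({(a, b)} : Set (Fin M1 × Fin M2)) ×ˢ (Z2n ⁻¹' {s} ∩ Z1n ⁻¹' {t}) := by
      ext p
      simp only [hV0, Set.mem_preimage, Set.mem_singleton_iff, Prod.ext_iff, Set.mem_prod,
        Set.mem_inter_iff]
      tauto
    rw [hset, hν, nu_msg_singleton μ,
      hIndepn.measure_inter_preimage_eq_mul _ _ (measurableSet_singleton s)
        (measurableSet_singleton t)]
    rw [ENNReal.toReal_mul, ENNReal.toReal_inv, ENNReal.toReal_mul, ENNReal.toReal_mul]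
    simp only [ENNReal.toReal_natCast]
    rw [mul_inv]
    simp only [hp1, hp2]
    ring
  have hentV0 : Hent ν V0 = Hent μ Z2n + (Real.log M2 + (Real.log M1 + Hent μ Z1n)) := by
    have h1 : Hent ν V0 = ∑ x : (Fin n → ZMod q) × (Fin M2 × (Fin M1 × (Fin n → ZMod q))),
        Real.negMulLog (p2 x.1 * ((fun _ : Fin M2 => (M2 : ℝ)⁻¹) x.2.1 *
          ((fun _ : Fin M1 => (M1 : ℝ)⁻¹) x.2.2.1 * p1 x.2.2.2))) := by
      unfold Hent
      exact Finset.sum_congr rfl fun x _ => by rw [distV0 x]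
    rw [h1, sum_negMulLog_mul4 p2 _ _ p1 hp2sum (sum_inv_card hM2) (sum_inv_card hM1) hp1sum,
      sum_negMulLog_inv_card hM2, sum_negMulLog_inv_card hM1]
    rfl
  have hentD : Hent ν D = Hent μ Z2n := by
    unfold Hent
    refine Finset.sum_congr rfl fun s _ => ?_
    have hm : ∑ y : Fin M2 × (Fin M1 × (Fin n → ZMod q)), (ν (V0 ⁻¹' {(s, y)})).toReal
        = (ν (D ⁻¹' {s})).toReal :=
      dist_marginal_fst ν (X := D) (Y := fun p => (p.1.2, (p.1.1, Z1n p.2))) hV0m s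
    rw [← hm]
    have hsum : ∑ y : Fin M2 × (Fin M1 × (Fin n → ZMod q)), (ν (V0 ⁻¹' {(s, y)})).toReal
        = ∑ y : Fin M2 × (Fin M1 × (Fin n → ZMod q)),
            p2 s * ((fun _ : Fin M2 => (M2 : ℝ)⁻¹) y.1 *
              ((fun _ : Fin M1 => (M1 : ℝ)⁻¹) y.2.1 * p1 y.2.2)) :=
      Finset.sum_congr rfl fun y _ => distV0 (s, y)
    rw [hsum, ← Finset.mul_sum]
    rw [sum_prod_eq_one (fun _ : Fin M2 => (M2 : ℝ)⁻¹)
      (fun z : Fin M1 × (Fin n → ZMod q) => (fun _ : Fin M1 => (M1 : ℝ)⁻¹) z.1 * p1 z.2)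
      (sum_inv_card hM2) (sum_prod_eq_one _ _ (sum_inv_card hM1) hp1sum), mul_one]
  have hentX : Hent ν X = Real.log M2 := by
    have hWm : Measurable (fun p : (Fin M1 × Fin M2) × Ω => (p.1.1, p.1.2)) :=
      (measurable_fst.comp measurable_fst).prodMk (measurable_snd.comp measurable_fst)
    have hW2dist : ∀ b : Fin M2, (ν (X ⁻¹' {b})).toReal = (M2 : ℝ)⁻¹ := by
      intro b
      have hm : ∑ a : Fin M1,
          (ν ((fun p : (Fin M1 × Fin M2) × Ω => (p.1.1, p.1.2)) ⁻¹' {(a, b)})).toReal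
          = (ν (X ⁻¹' {b})).toReal := dist_marginal_snd ν hWm b
      rw [← hm]
      have hone : ∀ a : Fin M1,
          (ν ((fun p : (Fin M1 × Fin M2) × Ω => (p.1.1, p.1.2)) ⁻¹' {(a, b)})).toReal
          = ((M1 : ℝ) * M2)⁻¹ := by
        intro a
        have hset : ((fun p : (Fin M1 × Fin M2) × Ω => (p.1.1, p.1.2)) ⁻¹' {(a, b)})
            = ({(a, b)} : Set (Fin M1 × Fin M2)) ×ˢ (Set.univ : Set Ω) := by
          ext p
          simp [Prod.ext_iff, eq_comm]
        rw [hset, hν, nu_msg_singleton μ, measure_univ, mul_one, ENNReal.toReal_inv,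
          ENNReal.toReal_mul]
        simp
      rw [Finset.sum_congr rfl (fun a _ => hone a), Finset.sum_const, Finset.card_univ,
        Fintype.card_fin, nsmul_eq_mul]
      have hM1' : (M1 : ℝ) ≠ 0 := Nat.cast_ne_zero.mpr hM1.ne'
      have hM2' : (M2 : ℝ) ≠ 0 := Nat.cast_ne_zero.mpr hM2.ne'
      field_simp
    unfold Hent
    rw [Finset.sum_congr rfl (fun b _ => by rw [hW2dist b])]
    exact sum_negMulLog_inv_card hM2
  set φ : (Fin n → ZMod q) × (Fin M2 × (Fin M1 × (Fin n → ZMod q))) →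
      (Fin n → ZMod q) × (Fin M2 × (Fin M1 × (Fin n → ZMod q))) :=
    fun x => (x.1, (x.2.1, (x.2.2.1, TWY1 C x.2.2.1 x.2.1 x.2.2.2 x.1))) with hφ
  have hφinj : Function.Injective φ := by
    rintro ⟨s, b, a, t⟩ ⟨s', b', a', t'⟩ h
    simp only [hφ, Prod.ext_iff] at h
    obtain ⟨hs, hb, ha, hy⟩ := h
    subst hs; subst hb; subst ha
    have ht : t = t' := TWY1_inj C a b s hy
    subst ht
    rfl
  have hbij : Hent ν (fun p => (D p, (X p, T p))) = Hent ν V0 := by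
    have h := hent_comp_inj ν φ hφinj V0
    have heq : (fun p : (Fin M1 × Fin M2) × Ω => (D p, (X p, T p)))
        = (fun ω => φ (V0 ω)) := rfl
    rw [heq, h]
  have hIdent : Hent ν (fun ω => (D ω, (X ω, T ω)))
      = Hent ν D + (Hent ν X + (Real.log M1 + Hent μ Z1n)) := by
    rw [hbij, hentV0, hentD, hentX]
  have hchain := chain_ineq ν hXm hTm hDm (fun t : Fin M1 × (Fin n → ZMod q) => C.g1 t.1 t.2)
    (Real.log M1 + Hent μ Z1n) hIdent
  rw [hentX] at hchain
  have hPe : (ν {ω | (fun t : Fin M1 × (Fin n → ZMod q) => C.g1 t.1 t.2) (T ω) ≠ X ω}).toReal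
      = (twPe1 μ Z1 Z2 C).toReal := rfl
  rw [hPe] at hchain
  have hcardA : (Fintype.card (Fin M2) : ℝ) = M2 := by simp
  have hcardB : Real.log (Fintype.card (Fin M1 × (Fin n → ZMod q)))
      = Real.log M1 + (n : ℝ) * Real.log q := by
    have h1 : Fintype.card (Fin M1 × (Fin n → ZMod q)) = M1 * q ^ n := by
      simp [Fintype.card_prod, Fintype.card_fun, ZMod.card]
    have hq0 : (q : ℝ) ≠ 0 := Nat.cast_ne_zero.mpr (NeZero.ne q)
    have hM1' : (M1 : ℝ) ≠ 0 := Nat.cast_ne_zero.mpr hM1.ne'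
    rw [h1]
    push_cast
    rw [Real.log_mul hM1' (pow_ne_zero n hq0), Real.log_pow]
  rw [hcardB, hcardA] at hchain
  have hZ1eq : Hent μ (fun ω => (fun i : Fin n => Z1 ω i)) = Hent μ Z1n := rfl
  rw [hZ1eq]
  linarith

end KeyIneq2


/-- **Converse part of Theorem 1**: for the additive-noise two-way channel with stationary
ergodic noise processes Z1 and Z2 that are independent of each other (and, by construction,
of the uniform independent messages), every achievable rate pair (R1, R2) satisfies
R1 ≤ log q − H̄(Z2) and R2 ≤ log q − H̄(Z1), where H̄(Zj) = lim_n H(Z_j^n)/n. -/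
theorem twc_converse {Ω : Type*} [MeasurableSpace Ω] (μ : Measure Ω)
    [IsProbabilityMeasure μ] (q : ℕ) [NeZero q] (hq : 2 ≤ q)
    (Z1 Z2 : Ω → ℕ → ZMod q) (hZ1 : Measurable Z1) (hZ2 : Measurable Z2)
    (hStatErg1 : Ergodic shift (μ.map Z1))
    (hStatErg2 : Ergodic shift (μ.map Z2))
    (hIndep : IndepFun Z1 Z2 μ)
    (hbar1 hbar2 : ℝ)
    (hrate1 : Tendsto (fun n : ℕ =>
      Hent μ (fun ω => (fun i : Fin n => Z1 ω i)) / n) atTop (𝓝 hbar1))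
    (hrate2 : Tendsto (fun n : ℕ =>
      Hent μ (fun ω => (fun i : Fin n => Z2 ω i)) / n) atTop (𝓝 hbar2))
    (R1 R2 : ℝ) (hach : twAchievable μ q Z1 Z2 R1 R2) :
    R1 ≤ Real.log q - hbar2 ∧ R2 ≤ Real.log q - hbar1 := by
  obtain ⟨M1, M2, C, hM, htend1, htend2⟩ := hach
  have hp1 : Tendsto (fun n => (twPe1 μ Z1 Z2 (C n)).toReal) atTop (𝓝 0) := by
    have h := (ENNReal.tendsto_toReal (a := 0) (by simp)).comp htend1
    rw [ENNReal.toReal_zero] at h; exact h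
  have hp2 : Tendsto (fun n => (twPe2 μ Z1 Z2 (C n)).toReal) atTop (𝓝 0) := by
    have h := (ENNReal.tendsto_toReal (a := 0) (by simp)).comp htend2
    rw [ENNReal.toReal_zero] at h; exact h
  constructor
  · -- R1 bound, via decoding of W1 at user 2
    set b : ℕ → ℝ := fun n => (Real.log q + Real.log 2 / n
        - Hent μ (fun ω => (fun i : Fin n => Z2 ω i)) / n)
        / (1 - (twPe2 μ Z1 Z2 (C n)).toReal) with hb
    have hbtend : Tendsto b atTop (𝓝 ((Real.log q + 0 - hbar2) / (1 - 0))) := by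
      refine Tendsto.div (Tendsto.sub (Tendsto.add tendsto_const_nhds
        (tendsto_const_div_atTop_nhds_zero_nat _)) hrate2)
        (Tendsto.sub tendsto_const_nhds hp2) (by norm_num)
    have heq : (Real.log q + 0 - hbar2) / (1 - 0) = Real.log q - hbar2 := by norm_num
    rw [heq] at hbtend
    refine ge_of_tendsto hbtend ?_
    have h1 : ∀ᶠ n in atTop, (twPe2 μ Z1 Z2 (C n)).toReal < 1/2 :=
      hp2.eventually (gt_mem_nhds (by norm_num))
    filter_upwards [h1, eventually_ge_atTop 1] with n hpn hn1
    obtain ⟨hM1, hM2, hR1, hR2⟩ := hM n hn1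
    refine hR1.trans ?_
    have hkey := key_ineq_R1 μ Z1 Z2 hZ1 hZ2 hIndep hM1 hM2 (C n)
    have hd : (0:ℝ) < 1 - (twPe2 μ Z1 Z2 (C n)).toReal := by linarith
    have hnpos : (0:ℝ) < n := by exact_mod_cast hn1
    rw [hb, div_le_div_iff₀ hnpos hd]
    have hAn : (Real.log q + Real.log 2 / n
        - Hent μ (fun ω => (fun i : Fin n => Z2 ω i)) / n) * n
        = n * Real.log q + Real.log 2 - Hent μ (fun ω => (fun i : Fin n => Z2 ω i)) := by
      field_simp
    rw [hAn]
    have hexp : Real.log (M1 n) * (1 - (twPe2 μ Z1 Z2 (C n)).toReal)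
        = Real.log (M1 n) - (twPe2 μ Z1 Z2 (C n)).toReal * Real.log (M1 n) := by ring
    rw [hexp]
    linarith
  · -- R2 bound, via decoding of W2 at user 1
    set b : ℕ → ℝ := fun n => (Real.log q + Real.log 2 / n
        - Hent μ (fun ω => (fun i : Fin n => Z1 ω i)) / n)
        / (1 - (twPe1 μ Z1 Z2 (C n)).toReal) with hb
    have hbtend : Tendsto b atTop (𝓝 ((Real.log q + 0 - hbar1) / (1 - 0))) := by
      refine Tendsto.div (Tendsto.sub (Tendsto.add tendsto_const_nhds
        (tendsto_const_div_atTop_nhds_zero_nat _)) hrate1)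
        (Tendsto.sub tendsto_const_nhds hp1) (by norm_num)
    have heq : (Real.log q + 0 - hbar1) / (1 - 0) = Real.log q - hbar1 := by norm_num
    rw [heq] at hbtend
    refine ge_of_tendsto hbtend ?_
    have h1 : ∀ᶠ n in atTop, (twPe1 μ Z1 Z2 (C n)).toReal < 1/2 :=
      hp1.eventually (gt_mem_nhds (by norm_num))
    filter_upwards [h1, eventually_ge_atTop 1] with n hpn hn1
    obtain ⟨hM1, hM2, hR1, hR2⟩ := hM n hn1
    refine hR2.trans ?_
    have hkey := key_ineq_R2 μ Z1 Z2 hZ1 hZ2 hIndep hM1 hM2 (C n)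
    have hd : (0:ℝ) < 1 - (twPe1 μ Z1 Z2 (C n)).toReal := by linarith
    have hnpos : (0:ℝ) < n := by exact_mod_cast hn1
    rw [hb, div_le_div_iff₀ hnpos hd]
    have hAn : (Real.log q + Real.log 2 / n
        - Hent μ (fun ω => (fun i : Fin n => Z1 ω i)) / n) * n
        = n * Real.log q + Real.log 2 - Hent μ (fun ω => (fun i : Fin n => Z1 ω i)) := by
      field_simp
    rw [hAn]
    have hexp : Real.log (M2 n) * (1 - (twPe1 μ Z1 Z2 (C n)).toReal)
        = Real.log (M2 n) - (twPe1 μ Z1 Z2 (C n)).toReal * Real.log (M2 n) := by ring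
    rw [hexp]
    linarith


end
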